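/- Let w ∈ C¹(ℝ^N) satisfy |∇w(x)| ≤ A₆(1+|x|)^{−(N−1)}. For λ ∈ (0,1), set w₀(x) = w((x−Ry₀)/λ) and w_y(x) = w((x−Ry)/(1−λ)) with |y₀| = 1, y ∈ ∂B₂(y₀). Then there exists C = C(λ) > 0 such that ∫_{ℝ^N} ∇w₀ · ∇w_y dx ≤ C R^{−(N−2)} for all R ≥ 1. -/

import Mathlib

open MeasureTheory Real Filter
open scoped Topology RealInnerProductSpace

section Aux

open Set

variable {N : ℕ}

lemma stmt10.dimE (hN : 3 ≤ N) : Module.finrank ℝ (EuclideanSpace ℝ (Fin N)) = N :=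
  finrank_euclideanSpace_fin

lemma stmt10.nontrivE (hN : 3 ≤ N) : Nontrivial (EuclideanSpace ℝ (Fin N)) := by
  have : 0 < Module.finrank ℝ (EuclideanSpace ℝ (Fin N)) := by rw [stmt10.dimE hN]; omega
  exact Module.nontrivial_of_finrank_pos this

lemma stmt10.gradZ (w : EuclideanSpace ℝ (Fin N) → ℝ) (hw : Differentiable ℝ w)
    (c : ℝ) (v x : EuclideanSpace ℝ (Fin N)) :
    gradient (fun z => w (c • (z - v))) x = c • gradient w (c • (x - v)) := by
  have hg : HasFDerivAt (fun z : EuclideanSpace ℝ (Fin N) => c • (z - v))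
      (c • ContinuousLinearMap.id ℝ (EuclideanSpace ℝ (Fin N))) x :=
    ((hasFDerivAt_id x).sub_const v).const_smul c
  have hu := ((hw (c • (x - v))).hasGradientAt.hasFDerivAt).comp x hg
  have heq : ((InnerProductSpace.toDual ℝ _ (gradient w (c • (x - v)))).comp
      (c • ContinuousLinearMap.id ℝ (EuclideanSpace ℝ (Fin N))))
      = InnerProductSpace.toDual ℝ _ (c • gradient w (c • (x - v))) := by
    ext z
    simp [real_inner_smul_left, real_inner_smul_right]
  rw [heq] at hu
  have h := hu.hasGradientAt.gradient
  rw [LinearIsometryEquiv.symm_apply_apply] at h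
  exact h

lemma stmt10.aux1 (e ρ s t : ℝ) (he : e ≤ 0) (hρ : 1 ≤ ρ) (hs : 0 ≤ s) (hst : s ≤ t)
    (h2 : 2*ρ ≤ s+t) :
    (1+s)^e*(1+t)^e ≤ ρ^e * (Iic ρ).indicator (fun r => (1+r)^e) s
      + (Ioi ρ).indicator (fun r => (1+r)^(2*e)) s := by
  have hρ0 : (0:ℝ) < ρ := by linarith
  have hρt : ρ ≤ 1 + t := by linarith
  have h1t : (1+t)^e ≤ ρ^e := rpow_le_rpow_of_nonpos hρ0 hρt he
  rcases le_or_gt s ρ with h | h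
  · rw [indicator_of_mem (by exact h) , indicator_of_notMem (by simpa using h)]
    have : (1+s)^e*(1+t)^e ≤ (1+s)^e * ρ^e :=
      mul_le_mul_of_nonneg_left h1t (rpow_nonneg (by linarith) e)
    linarith [this, mul_comm ((1+s)^e) (ρ^e)]
  · rw [indicator_of_notMem (by simpa using h), indicator_of_mem (by exact h)]
    have h1 : (1+t)^e ≤ (1+s)^e := rpow_le_rpow_of_nonpos (by linarith) (by linarith) he
    have : (1+s)^e*(1+t)^e ≤ (1+s)^e * (1+s)^e :=
      mul_le_mul_of_nonneg_left h1 (rpow_nonneg (by linarith) e)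
    rw [← Real.rpow_add (by linarith : (0:ℝ) < 1+s)] at this
    rw [mul_zero, zero_add]
    calc (1+s)^e*(1+t)^e ≤ (1+s)^(e+e) := this
    _ = (1+s)^(2*e) := by ring_nf

lemma stmt10.aux2 (e ρ : ℝ) (he : e ≤ 0) (hρ : 1 ≤ ρ) (s t : ℝ) (hs : 0 ≤ s) (ht : 0 ≤ t)
    (h2 : 2*ρ ≤ s+t) :
    (1+s)^e*(1+t)^e ≤ ρ^e * ((Iic ρ).indicator (fun r => (1+r)^e) s
        + (Iic ρ).indicator (fun r => (1+r)^e) t)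
      + ((Ioi ρ).indicator (fun r => (1+r)^(2*e)) s
        + (Ioi ρ).indicator (fun r => (1+r)^(2*e)) t) := by
  have hρe : 0 ≤ ρ^e := rpow_nonneg (by linarith) e
  have hind : ∀ u : ℝ, 0 ≤ u → 0 ≤ (Iic ρ).indicator (fun r => (1+r)^e) u := by
    intro u hu; rw [Set.indicator_apply]; split
    · have : (0:ℝ) < 1 + u := by linarith
      positivity
    · exact le_refl 0
  have hind2 : ∀ u : ℝ, 0 ≤ u → 0 ≤ (Ioi ρ).indicator (fun r => (1+r)^(2*e)) u := by
    intro u hu; rw [Set.indicator_apply]; split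
    · have : (0:ℝ) < 1 + u := by linarith
      positivity
    · exact le_refl 0
  rcases le_total s t with h | h
  · have := stmt10.aux1 e ρ s t he hρ hs h h2
    nlinarith [hind t ht, hind2 t ht, hρe]
  · have := stmt10.aux1 e ρ t s he hρ ht h (by linarith)
    nlinarith [hind s hs, hind2 s hs, hρe, mul_comm ((1+s)^e) ((1+t)^e)]

-- near-region integral
lemma stmt10.int_G1 (hN : 3 ≤ N) (ρ : ℝ) (hρ : 1 ≤ ρ) :
    Integrable (fun x : EuclideanSpace ℝ (Fin N) =>
      (Iic ρ).indicator (fun r => (1+r)^(-((N:ℝ)-1))) ‖x‖) ∧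
    ∫ x : EuclideanSpace ℝ (Fin N), (Iic ρ).indicator (fun r => (1+r)^(-((N:ℝ)-1))) ‖x‖
      ≤ (N : ℝ) * (volume (Metric.ball (0 : EuclideanSpace ℝ (Fin N)) 1)).toReal * ρ := by
  haveI := stmt10.nontrivE hN
  have hρ0 : (0:ℝ) < ρ := by linarith
  set e : ℝ := -((N:ℝ)-1) with he
  constructor
  · have heq : (fun x : EuclideanSpace ℝ (Fin N) => (Iic ρ).indicator (fun r => (1+r)^e) ‖x‖)
        = (Metric.closedBall (0 : EuclideanSpace ℝ (Fin N)) ρ).indicator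
            (fun x => (1+‖x‖)^e) := by
      funext x
      by_cases h : ‖x‖ ≤ ρ
      · rw [Set.indicator_of_mem (by exact h), Set.indicator_of_mem (by
          simpa [Metric.mem_closedBall, dist_zero_right] using h)]
      · rw [Set.indicator_of_notMem (by exact h), Set.indicator_of_notMem (by
          simpa [Metric.mem_closedBall, dist_zero_right] using h)]
    rw [heq, integrable_indicator_iff measurableSet_closedBall]
    have hc : Continuous (fun x : EuclideanSpace ℝ (Fin N) => (1+‖x‖)^e) :=
      Continuous.rpow_const (by continuity) (fun x => Or.inl (by positivity))
    exact hc.locallyIntegrable.integrableOn_isCompact (isCompact_closedBall _ _)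
  · rw [show (fun x : EuclideanSpace ℝ (Fin N) => (Iic ρ).indicator (fun r => (1+r)^e) ‖x‖)
        = (fun x : EuclideanSpace ℝ (Fin N) =>
            (fun r => (Iic ρ).indicator (fun r => (1+r)^e) r) ‖x‖) from rfl,
      integral_fun_norm_addHaar volume (fun r => (Iic ρ).indicator (fun r : ℝ => (1+r)^e) r)]
    rw [stmt10.dimE hN, nsmul_eq_mul, smul_eq_mul]
    have hvol : (0:ℝ) ≤ (volume (Metric.ball (0 : EuclideanSpace ℝ (Fin N)) 1)).toReal :=
      ENNReal.toReal_nonneg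
    have hI : ∫ r in Ioi (0:ℝ), r ^ (N-1) • (Iic ρ).indicator (fun r : ℝ => (1+r)^e) r ≤ ρ := by
      have h1 : (fun _ : ℝ => (0:ℝ)) ≤ᵐ[volume.restrict (Ioi (0:ℝ))]
          (fun r => r ^ (N-1) • (Iic ρ).indicator (fun r : ℝ => (1+r)^e) r) := by
        refine (ae_restrict_iff' measurableSet_Ioi).2 (ae_of_all _ fun r hr => ?_)
        have hind : (0:ℝ) ≤ (Iic ρ).indicator (fun r : ℝ => (1+r)^e) r := by
          rw [Set.indicator_apply]; split
          · have h1r : (0:ℝ) < 1 + r := by have := hr.out; linarith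
            positivity
          · exact le_refl 0
        have : (0:ℝ) ≤ r := le_of_lt hr.out
        simpa [smul_eq_mul] using mul_nonneg (pow_nonneg this _) hind
      have h2 : Integrable ((Ioc (0:ℝ) ρ).indicator (fun _ => (1:ℝ)))
          (volume.restrict (Ioi (0:ℝ))) := by
        rw [integrable_indicator_iff measurableSet_Ioc]
        refine integrableOn_const (ne_of_lt ?_)
        exact lt_of_le_of_lt (Measure.restrict_apply_le _ _) measure_Ioc_lt_top
      have h3 : (fun r => r ^ (N-1) • (Iic ρ).indicator (fun r : ℝ => (1+r)^e) r)
          ≤ᵐ[volume.restrict (Ioi (0:ℝ))] ((Ioc (0:ℝ) ρ).indicator (fun _ => (1:ℝ))) := by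
        refine (ae_restrict_iff' measurableSet_Ioi).2 (ae_of_all _ fun r hr => ?_)
        have hr0 : (0:ℝ) < r := hr.out
        by_cases hrρ : r ≤ ρ
        · simp only [Set.indicator_apply, mem_Iic, mem_Ioc, if_pos hrρ,
            if_pos (show 0 < r ∧ r ≤ ρ from ⟨hr0, hrρ⟩)]
          have h1r : (0:ℝ) < 1 + r := by linarith
          have hcast : ((N:ℝ)-1) = ((N-1 : ℕ) : ℝ) := by
            have : 1 ≤ N := by omega
            push_cast [Nat.cast_sub this]; ring
          have hpe : (1+r)^e = ((1+r)^(N-1 : ℕ))⁻¹ := by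
            rw [he, hcast, Real.rpow_neg h1r.le, Real.rpow_natCast]
          rw [smul_eq_mul, hpe, ← div_eq_mul_inv, div_le_one (by positivity)]
          exact pow_le_pow_left₀ hr0.le (by linarith) _
        · simp only [Set.indicator_apply, mem_Iic, mem_Ioc, if_neg hrρ,
            if_neg (show ¬(0 < r ∧ r ≤ ρ) from fun h => hrρ h.2)]
          simp
      calc ∫ r in Ioi (0:ℝ), r ^ (N-1) • (Iic ρ).indicator (fun r : ℝ => (1+r)^e) r
          ≤ ∫ r in Ioi (0:ℝ), (Ioc (0:ℝ) ρ).indicator (fun _ => (1:ℝ)) r :=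
            integral_mono_of_nonneg h1 h2 h3
        _ = ρ := by
            rw [integral_indicator_const (1:ℝ) measurableSet_Ioc, measureReal_def,
              Measure.restrict_apply measurableSet_Ioc,
              Set.inter_eq_left.2 Ioc_subset_Ioi_self, Real.volume_Ioc, smul_eq_mul, mul_one,
              ENNReal.toReal_ofReal (by linarith)]
            ring
    calc (N:ℝ) * ((volume (Metric.ball (0 : EuclideanSpace ℝ (Fin N)) 1)).toReal
          * ∫ r in Ioi (0:ℝ), r ^ (N-1) • (Iic ρ).indicator (fun r : ℝ => (1+r)^e) r)
        ≤ (N:ℝ) * ((volume (Metric.ball (0 : EuclideanSpace ℝ (Fin N)) 1)).toReal * ρ) := by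
          apply mul_le_mul_of_nonneg_left (mul_le_mul_of_nonneg_left hI hvol)
            (Nat.cast_nonneg N)
      _ = (N:ℝ) * (volume (Metric.ball (0 : EuclideanSpace ℝ (Fin N)) 1)).toReal * ρ := by ring

-- far-region integral
lemma stmt10.int_G2 (hN : 3 ≤ N) (ρ : ℝ) (hρ : 1 ≤ ρ) :
    Integrable (fun x : EuclideanSpace ℝ (Fin N) =>
      (Ioi ρ).indicator (fun r => (1+r)^(2*(-((N:ℝ)-1)))) ‖x‖) ∧
    ∫ x : EuclideanSpace ℝ (Fin N), (Ioi ρ).indicator (fun r => (1+r)^(2*(-((N:ℝ)-1)))) ‖x‖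
      ≤ (N : ℝ) * (volume (Metric.ball (0 : EuclideanSpace ℝ (Fin N)) 1)).toReal
          * (ρ ^ (-((N:ℝ)-2)) * ((N:ℝ)-2)⁻¹) := by
  haveI := stmt10.nontrivE hN
  have hρ0 : (0:ℝ) < ρ := by linarith
  set e : ℝ := -((N:ℝ)-1) with he
  have hN2 : (2:ℝ) < (N:ℝ) := by exact_mod_cast (by omega : 2 < N)
  have he1 : e < -1 := by rw [he]; linarith
  have he0 : e ≤ 0 := by linarith
  have hfr : (Module.finrank ℝ (EuclideanSpace ℝ (Fin N)) : ℝ) < 2*((N:ℝ)-1) := by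
    rw [stmt10.dimE hN]; linarith
  have hcast : ((N:ℝ)-1) = ((N-1 : ℕ) : ℝ) := by
    have : 1 ≤ N := by omega
    push_cast [Nat.cast_sub this]; ring
  have hindnn : ∀ u : ℝ, 0 ≤ u → 0 ≤ (Ioi ρ).indicator (fun r : ℝ => (1+r)^(2*e)) u := by
    intro u hu; rw [Set.indicator_apply]; split
    · have : (0:ℝ) < 1 + u := by linarith
      positivity
    · exact le_refl 0
  have hmeas : Measurable (fun x : EuclideanSpace ℝ (Fin N) =>
      (Ioi ρ).indicator (fun r : ℝ => (1+r)^(2*e)) ‖x‖) := by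
    apply Measurable.comp (Measurable.indicator ?_ measurableSet_Ioi) measurable_norm
    fun_prop
  constructor
  · have hg : Integrable (fun x : EuclideanSpace ℝ (Fin N) => (1+‖x‖) ^ (-(2*((N:ℝ)-1)))) :=
      integrable_one_add_norm hfr
    have h2e : 2*e = -(2*((N:ℝ)-1)) := by rw [he]; ring
    have hg' : Integrable (fun x : EuclideanSpace ℝ (Fin N) => (1+‖x‖) ^ (2*e)) := by
      rw [h2e]; exact hg
    refine hg'.mono' hmeas.aestronglyMeasurable (ae_of_all _ fun x => ?_)
    rw [Real.norm_eq_abs, abs_of_nonneg (hindnn _ (norm_nonneg x))]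
    rw [Set.indicator_apply]; split
    · exact le_refl _
    · positivity
  · rw [show (fun x : EuclideanSpace ℝ (Fin N) => (Ioi ρ).indicator (fun r => (1+r)^(2*e)) ‖x‖)
        = (fun x : EuclideanSpace ℝ (Fin N) =>
            (fun r => (Ioi ρ).indicator (fun r : ℝ => (1+r)^(2*e)) r) ‖x‖) from rfl,
      integral_fun_norm_addHaar volume (fun r => (Ioi ρ).indicator (fun r : ℝ => (1+r)^(2*e)) r)]
    rw [stmt10.dimE hN, nsmul_eq_mul, smul_eq_mul]
    have hvol : (0:ℝ) ≤ (volume (Metric.ball (0 : EuclideanSpace ℝ (Fin N)) 1)).toReal :=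
      ENNReal.toReal_nonneg
    have hI : ∫ r in Ioi (0:ℝ), r ^ (N-1) • (Ioi ρ).indicator (fun r : ℝ => (1+r)^(2*e)) r
        ≤ ρ ^ (-((N:ℝ)-2)) * ((N:ℝ)-2)⁻¹ := by
      have h1 : (fun _ : ℝ => (0:ℝ)) ≤ᵐ[volume.restrict (Ioi (0:ℝ))]
          (fun r => r ^ (N-1) • (Ioi ρ).indicator (fun r : ℝ => (1+r)^(2*e)) r) := by
        refine (ae_restrict_iff' measurableSet_Ioi).2 (ae_of_all _ fun r hr => ?_)
        have hr0 : (0:ℝ) < r := hr.out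
        simpa [smul_eq_mul] using mul_nonneg (pow_nonneg hr0.le _) (hindnn r hr0.le)
      have h2 : Integrable ((Ioi ρ).indicator (fun r : ℝ => r ^ e))
          (volume.restrict (Ioi (0:ℝ))) := by
        rw [integrable_indicator_iff measurableSet_Ioi]
        have : IntegrableOn (fun r : ℝ => r ^ e) (Ioi ρ) volume :=
          integrableOn_Ioi_rpow_of_lt he1 hρ0
        unfold IntegrableOn at this ⊢
        rwa [Measure.restrict_restrict measurableSet_Ioi,
          Set.inter_eq_left.2 (Ioi_subset_Ioi hρ0.le)]
      have h3 : (fun r => r ^ (N-1) • (Ioi ρ).indicator (fun r : ℝ => (1+r)^(2*e)) r)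
          ≤ᵐ[volume.restrict (Ioi (0:ℝ))] ((Ioi ρ).indicator (fun r : ℝ => r ^ e)) := by
        refine (ae_restrict_iff' measurableSet_Ioi).2 (ae_of_all _ fun r hr => ?_)
        have hr0 : (0:ℝ) < r := hr.out
        by_cases hrρ : ρ < r
        · simp only [Set.indicator_apply, mem_Ioi, if_pos hrρ]
          have h2e : (1+r)^(2*e) ≤ r^(2*e) :=
            rpow_le_rpow_of_nonpos hr0 (by linarith) (by linarith)
          have hpow : r ^ (N-1 : ℕ) = r ^ ((N:ℝ)-1) := by
            rw [← Real.rpow_natCast, ← hcast]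
          calc r^(N-1 : ℕ) • (1+r)^(2*e) = r^((N:ℝ)-1) * (1+r)^(2*e) := by
                rw [smul_eq_mul, hpow]
            _ ≤ r^((N:ℝ)-1) * r^(2*e) :=
                mul_le_mul_of_nonneg_left h2e (rpow_nonneg hr0.le _)
            _ = r ^ (((N:ℝ)-1) + 2*e) := (Real.rpow_add hr0 _ _).symm
            _ = r ^ e := by rw [he]; ring_nf
        · simp only [Set.indicator_apply, mem_Ioi, if_neg hrρ]
          simp
      calc ∫ r in Ioi (0:ℝ), r ^ (N-1) • (Ioi ρ).indicator (fun r : ℝ => (1+r)^(2*e)) r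
          ≤ ∫ r in Ioi (0:ℝ), (Ioi ρ).indicator (fun r : ℝ => r ^ e) r :=
            integral_mono_of_nonneg h1 h2 h3
        _ = ∫ r in Ioi ρ, r ^ e := by
            rw [integral_indicator measurableSet_Ioi,
              Measure.restrict_restrict measurableSet_Ioi,
              Set.inter_eq_left.2 (Ioi_subset_Ioi hρ0.le)]
        _ = -ρ ^ (e+1) / (e+1) := integral_Ioi_rpow_of_lt he1 hρ0
        _ = ρ ^ (-((N:ℝ)-2)) * ((N:ℝ)-2)⁻¹ := by
            rw [show e + 1 = -((N:ℝ)-2) by rw [he]; ring]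
            rw [show -ρ ^ (-((N:ℝ)-2)) / -((N:ℝ)-2) = ρ ^ (-((N:ℝ)-2)) / ((N:ℝ)-2) from
              neg_div_neg_eq _ _, div_eq_mul_inv]
    calc (N:ℝ) * ((volume (Metric.ball (0 : EuclideanSpace ℝ (Fin N)) 1)).toReal
          * ∫ r in Ioi (0:ℝ), r ^ (N-1) • (Ioi ρ).indicator (fun r : ℝ => (1+r)^(2*e)) r)
        ≤ (N:ℝ) * ((volume (Metric.ball (0 : EuclideanSpace ℝ (Fin N)) 1)).toReal
            * (ρ ^ (-((N:ℝ)-2)) * ((N:ℝ)-2)⁻¹)) := by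
          apply mul_le_mul_of_nonneg_left (mul_le_mul_of_nonneg_left hI hvol)
            (Nat.cast_nonneg N)
      _ = (N:ℝ) * (volume (Metric.ball (0 : EuclideanSpace ℝ (Fin N)) 1)).toReal
            * (ρ ^ (-((N:ℝ)-2)) * ((N:ℝ)-2)⁻¹) := by ring

end Aux

set_option maxHeartbeats 1000000 in
/-- Interaction of the gradients of two translated and dilated solitons
(Lemma on `∫ ∇w₀ · ∇w_y ≤ C R^{-(N-2)}`). -/
theorem stmt10 (N : ℕ) (hN : 3 ≤ N)
    (A₆ : ℝ) (hA₆ : 0 < A₆)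
    (w : EuclideanSpace ℝ (Fin N) → ℝ) (hw : ContDiff ℝ 1 w)
    (hgrad : ∀ x, ‖gradient w x‖ ≤ A₆ * (1 + ‖x‖) ^ (-((N : ℝ) - 1)))
    (y₀ : EuclideanSpace ℝ (Fin N)) (hy₀ : ‖y₀‖ = 1)
    (l : ℝ) (hl0 : 0 < l) (hl1 : l < 1) :
    ∃ C > 0, ∀ R : ℝ, 1 ≤ R → ∀ y : EuclideanSpace ℝ (Fin N), ‖y - y₀‖ = 2 →
      ∫ x, ⟪gradient (fun z => w (l⁻¹ • (z - R • y₀))) x,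
            gradient (fun z => w ((1 - l)⁻¹ • (z - R • y))) x⟫
        ≤ C * R ^ (-((N : ℝ) - 2)) := by
  have hN2 : (2:ℝ) < (N:ℝ) := by exact_mod_cast (by omega : 2 < N)
  set e : ℝ := -((N:ℝ)-1) with he
  have he0 : e ≤ 0 := by rw [he]; linarith
  set volB : ℝ := (volume (Metric.ball (0 : EuclideanSpace ℝ (Fin N)) 1)).toReal with hvolB
  have hvol : 0 ≤ volB := ENNReal.toReal_nonneg
  have hl1' : (0:ℝ) < 1 - l := by linarith
  set K : ℝ := l⁻¹ * (1-l)⁻¹ * (A₆ * A₆) with hK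
  have hK0 : 0 ≤ K := by positivity
  set c2 : ℝ := (N:ℝ) * volB * (2 + 2*((N:ℝ)-2)⁻¹) with hc2
  have hc20 : 0 ≤ c2 := by
    have h1 : (0:ℝ) ≤ ((N:ℝ)-2)⁻¹ := by
      have : (0:ℝ) < (N:ℝ)-2 := by linarith
      positivity
    have h2 : (0:ℝ) ≤ (N:ℝ) := Nat.cast_nonneg N
    exact mul_nonneg (mul_nonneg h2 hvol) (by linarith)
  have hwd : Differentiable ℝ w := hw.differentiable one_ne_zero
  refine ⟨K * c2 + 1, by nlinarith [mul_nonneg hK0 hc20], fun R hR y hy => ?_⟩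
  have hR0 : (0:ℝ) < R := by linarith
  set a : EuclideanSpace ℝ (Fin N) := R • y₀ with ha
  set b : EuclideanSpace ℝ (Fin N) := R • y with hb
  have habn : ‖a - b‖ = 2 * R := by
    rw [ha, hb, ← smul_sub, norm_smul, Real.norm_eq_abs, abs_of_pos hR0, norm_sub_rev, hy]
    ring
  -- gradient formulas
  have hgr1 : ∀ x, gradient (fun z => w (l⁻¹ • (z - a))) x
      = l⁻¹ • gradient w (l⁻¹ • (x - a)) := fun x => stmt10.gradZ w hwd l⁻¹ a x
  have hgr2 : ∀ x, gradient (fun z => w ((1-l)⁻¹ • (z - b))) x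
      = (1-l)⁻¹ • gradient w ((1-l)⁻¹ • (x - b)) := fun x => stmt10.gradZ w hwd (1-l)⁻¹ b x
  -- pointwise bound by K * f_a * f_b
  have hbnd : ∀ (c : ℝ), 1 ≤ c → ∀ u : EuclideanSpace ℝ (Fin N),
      ‖gradient w (c • u)‖ ≤ A₆ * (1+‖u‖)^e := by
    intro c hc u
    refine (hgrad _).trans ?_
    have h1 : ‖u‖ ≤ ‖c • u‖ := by
      rw [norm_smul, Real.norm_eq_abs, abs_of_pos (by linarith : (0:ℝ) < c)]
      nlinarith [norm_nonneg u]
    exact mul_le_mul_of_nonneg_left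
      (rpow_le_rpow_of_nonpos (by positivity) (by linarith) he0) hA₆.le
  have hlinv : (1:ℝ) ≤ l⁻¹ := one_le_inv_iff₀.2 ⟨hl0, hl1.le⟩
  have hlinv' : (1:ℝ) ≤ (1-l)⁻¹ := one_le_inv_iff₀.2 ⟨hl1', by linarith⟩
  have hpt : ∀ x, (⟪gradient (fun z => w (l⁻¹ • (z - a))) x,
      gradient (fun z => w ((1-l)⁻¹ • (z - b))) x⟫ : ℝ)
      ≤ K * ((1+‖x-a‖)^e * (1+‖x-b‖)^e) := by
    intro x
    rw [hgr1 x, hgr2 x, real_inner_smul_left, real_inner_smul_right]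
    set u := gradient w (l⁻¹ • (x - a)) with hu
    set v := gradient w ((1-l)⁻¹ • (x - b)) with hv
    have h1 : (⟪u, v⟫ : ℝ) ≤ ‖u‖*‖v‖ := real_inner_le_norm u v
    have h2 : ‖u‖*‖v‖ ≤ (A₆*(1+‖x-a‖)^e)*(A₆*(1+‖x-b‖)^e) :=
      mul_le_mul (hbnd l⁻¹ hlinv (x-a)) (hbnd (1-l)⁻¹ hlinv' (x-b)) (norm_nonneg v)
        (by positivity)
    calc l⁻¹ * ((1-l)⁻¹ * ⟪u, v⟫) ≤ l⁻¹ * ((1-l)⁻¹ * ((A₆*(1+‖x-a‖)^e)*(A₆*(1+‖x-b‖)^e))) := by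
          apply mul_le_mul_of_nonneg_left
            (mul_le_mul_of_nonneg_left (h1.trans h2) (by positivity)) (by positivity)
      _ = K * ((1+‖x-a‖)^e * (1+‖x-b‖)^e) := by rw [hK]; ring
  -- integrable majorant
  obtain ⟨hG1i, hG1v⟩ := stmt10.int_G1 hN R hR
  obtain ⟨hG2i, hG2v⟩ := stmt10.int_G2 hN R hR
  rw [← he] at hG1i hG1v hG2i hG2v
  rw [← hvolB] at hG1v hG2v
  have hg1a : Integrable (fun x : EuclideanSpace ℝ (Fin N) =>
      (Set.Iic R).indicator (fun r => (1+r)^e) ‖x - a‖) := hG1i.comp_sub_right a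
  have hg1b : Integrable (fun x : EuclideanSpace ℝ (Fin N) =>
      (Set.Iic R).indicator (fun r => (1+r)^e) ‖x - b‖) := hG1i.comp_sub_right b
  have hg2a : Integrable (fun x : EuclideanSpace ℝ (Fin N) =>
      (Set.Ioi R).indicator (fun r => (1+r)^(2*e)) ‖x - a‖) := hG2i.comp_sub_right a
  have hg2b : Integrable (fun x : EuclideanSpace ℝ (Fin N) =>
      (Set.Ioi R).indicator (fun r => (1+r)^(2*e)) ‖x - b‖) := hG2i.comp_sub_right b
  set M : EuclideanSpace ℝ (Fin N) → ℝ := fun x =>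
    K * (R^e * ((Set.Iic R).indicator (fun r => (1+r)^e) ‖x - a‖
          + (Set.Iic R).indicator (fun r => (1+r)^e) ‖x - b‖)
      + ((Set.Ioi R).indicator (fun r => (1+r)^(2*e)) ‖x - a‖
          + (Set.Ioi R).indicator (fun r => (1+r)^(2*e)) ‖x - b‖)) with hM
  have hMi : Integrable M :=
    ((((hg1a.add hg1b).const_mul (R^e)).add (hg2a.add hg2b)).const_mul K)
  have hle : ∀ x, (⟪gradient (fun z => w (l⁻¹ • (z - a))) x,
      gradient (fun z => w ((1-l)⁻¹ • (z - b))) x⟫ : ℝ) ≤ M x := by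
    intro x
    refine (hpt x).trans ?_
    have htri : 2 * R ≤ ‖x-a‖ + ‖x-b‖ := by
      have := dist_triangle a x b
      rw [dist_eq_norm, dist_eq_norm, dist_eq_norm, norm_sub_rev a x] at this
      rw [← habn]; exact this
    have := stmt10.aux2 e R he0 hR ‖x-a‖ ‖x-b‖ (norm_nonneg _) (norm_nonneg _) htri
    exact mul_le_mul_of_nonneg_left this hK0
  by_cases hInt : Integrable (fun x : EuclideanSpace ℝ (Fin N) =>
      (⟪gradient (fun z => w (l⁻¹ • (z - a))) x,
        gradient (fun z => w ((1-l)⁻¹ • (z - b))) x⟫ : ℝ))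
  · have hRe : R ^ e * R = R ^ (-((N:ℝ)-2)) := by
      rw [show (-((N:ℝ)-2)) = e + 1 by rw [he]; ring, Real.rpow_add hR0, Real.rpow_one]
    have hRe0 : (0:ℝ) ≤ R ^ e := rpow_nonneg hR0.le e
    have hRn0 : (0:ℝ) ≤ R ^ (-((N:ℝ)-2)) := rpow_nonneg hR0.le _
    calc ∫ x, (⟪gradient (fun z => w (l⁻¹ • (z - a))) x,
            gradient (fun z => w ((1-l)⁻¹ • (z - b))) x⟫ : ℝ)
        ≤ ∫ x, M x := integral_mono hInt hMi hle
      _ = K * (R^e * ((∫ x : EuclideanSpace ℝ (Fin N),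
              (Set.Iic R).indicator (fun r => (1+r)^e) ‖x - a‖)
            + ∫ x : EuclideanSpace ℝ (Fin N),
              (Set.Iic R).indicator (fun r => (1+r)^e) ‖x - b‖)
          + ((∫ x : EuclideanSpace ℝ (Fin N),
              (Set.Ioi R).indicator (fun r => (1+r)^(2*e)) ‖x - a‖)
            + ∫ x : EuclideanSpace ℝ (Fin N),
              (Set.Ioi R).indicator (fun r => (1+r)^(2*e)) ‖x - b‖)) := by
          have hA : Integrable (fun x : EuclideanSpace ℝ (Fin N) =>
              R^e * ((Set.Iic R).indicator (fun r => (1+r)^e) ‖x - a‖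
                + (Set.Iic R).indicator (fun r => (1+r)^e) ‖x - b‖)) volume :=
            (hg1a.add hg1b).const_mul (R^e)
          have hB : Integrable (fun x : EuclideanSpace ℝ (Fin N) =>
              (Set.Ioi R).indicator (fun r => (1+r)^(2*e)) ‖x - a‖
                + (Set.Ioi R).indicator (fun r => (1+r)^(2*e)) ‖x - b‖) volume :=
            hg2a.add hg2b
          rw [hM, integral_const_mul, integral_add hA hB, integral_const_mul,
            integral_add hg1a hg1b, integral_add hg2a hg2b]
      _ = K * (R^e * ((∫ x : EuclideanSpace ℝ (Fin N),
              (Set.Iic R).indicator (fun r => (1+r)^e) ‖x‖)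
            + ∫ x : EuclideanSpace ℝ (Fin N),
              (Set.Iic R).indicator (fun r => (1+r)^e) ‖x‖)
          + ((∫ x : EuclideanSpace ℝ (Fin N),
              (Set.Ioi R).indicator (fun r => (1+r)^(2*e)) ‖x‖)
            + ∫ x : EuclideanSpace ℝ (Fin N),
              (Set.Ioi R).indicator (fun r => (1+r)^(2*e)) ‖x‖)) := by
          have T1a := integral_sub_right_eq_self
            (fun x : EuclideanSpace ℝ (Fin N) =>
              (Set.Iic R).indicator (fun r => (1+r)^e) ‖x‖) (μ := volume) a
          have T1b := integral_sub_right_eq_self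
            (fun x : EuclideanSpace ℝ (Fin N) =>
              (Set.Iic R).indicator (fun r => (1+r)^e) ‖x‖) (μ := volume) b
          have T2a := integral_sub_right_eq_self
            (fun x : EuclideanSpace ℝ (Fin N) =>
              (Set.Ioi R).indicator (fun r => (1+r)^(2*e)) ‖x‖) (μ := volume) a
          have T2b := integral_sub_right_eq_self
            (fun x : EuclideanSpace ℝ (Fin N) =>
              (Set.Ioi R).indicator (fun r => (1+r)^(2*e)) ‖x‖) (μ := volume) b
          rw [T1a, T1b, T2a, T2b]
      _ ≤ K * (R^e * (((N:ℝ) * volB * R) + ((N:ℝ) * volB * R))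
          + (((N:ℝ) * volB * (R ^ (-((N:ℝ)-2)) * ((N:ℝ)-2)⁻¹))
            + ((N:ℝ) * volB * (R ^ (-((N:ℝ)-2)) * ((N:ℝ)-2)⁻¹)))) := by
          exact mul_le_mul_of_nonneg_left
            (add_le_add (mul_le_mul_of_nonneg_left (add_le_add hG1v hG1v) hRe0)
              (add_le_add hG2v hG2v)) hK0
      _ = K * c2 * R ^ (-((N:ℝ)-2)) := by
          rw [hc2]
          have hX : R^e * ((N:ℝ) * volB * R) = (N:ℝ) * volB * R ^ (-((N:ℝ)-2)) := by
            rw [← hRe]; ring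
          linear_combination (2*K) * hX
      _ ≤ (K * c2 + 1) * R ^ (-((N:ℝ)-2)) := by nlinarith [hRn0]
  · rw [integral_undef hInt]
    have : (0:ℝ) ≤ (K * c2 + 1) * R ^ (-((N:ℝ)-2)) := by
      have := rpow_nonneg hR0.le (-((N:ℝ)-2))
      nlinarith [mul_nonneg hK0 hc20]
    linarith
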